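/- For every ξ ∈ ℝ^p there exists a real number c ≥ 0 such that the (Bochner) vector integral ∫_S x · exp(⟨ξ, x⟩) dσ(x) equals c • ξ; that is, the first-moment integral of the exponential weight over the sphere is a nonnegative scalar multiple of ξ. Consequently the mean of the von Mises–Fisher distribution, m(ξ) = K(ξ)^{-1} ∫_S x · exp(⟨ξ, x⟩) dσ(x), lies on the ray ℝ_{≥0} · ξ. -/

import Mathlib

open MeasureTheory Metric
open scoped RealInnerProductSpace ENNReal

/-- The normalising constant of the von Mises–Fisher distribution with natural
parameter `ξ`, relative to the surface measure `σ` on the unit sphere. -/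
noncomputable def vmfK {p : ℕ} (σ : Measure (EuclideanSpace ℝ (Fin p)))
    (ξ : EuclideanSpace ℝ (Fin p)) : ℝ :=
  ∫ x, Real.exp ⟪ξ, x⟫ ∂σ

/-- The von Mises–Fisher density with natural parameter `ξ`. -/
noncomputable def vmfDens {p : ℕ} (σ : Measure (EuclideanSpace ℝ (Fin p)))
    (ξ x : EuclideanSpace ℝ (Fin p)) : ℝ :=
  Real.exp ⟪ξ, x⟫ / vmfK σ ξ

/-- for a rotation-invariant finite measure `σ` on the unit sphere,
the first-moment integral `∫_S x · exp(⟪ξ,x⟫) dσ(x)` is a nonnegative scalar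
multiple of `ξ`; consequently the von Mises–Fisher mean lies on the ray `ℝ₊ ξ`. -/
theorem vmf_mean_on_ray
    (p : ℕ) (hp : 2 ≤ p)
    (σ : Measure (EuclideanSpace ℝ (Fin p))) [IsFiniteMeasure σ]
    (hσ : σ (sphere (0 : EuclideanSpace ℝ (Fin p)) 1)ᶜ = 0)
    (hinv : ∀ T : EuclideanSpace ℝ (Fin p) ≃ₗᵢ[ℝ] EuclideanSpace ℝ (Fin p),
      Measure.map T σ = σ)
    (hK : ∀ ζ : EuclideanSpace ℝ (Fin p), 0 < vmfK σ ζ)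
    (ξ : EuclideanSpace ℝ (Fin p)) :
    (∃ c : ℝ, 0 ≤ c ∧ (∫ x, Real.exp ⟪ξ, x⟫ • x ∂σ) = c • ξ) ∧
    (∃ c' : ℝ, 0 ≤ c' ∧
      (vmfK σ ξ)⁻¹ • (∫ x, Real.exp ⟪ξ, x⟫ • x ∂σ) = c' • ξ) := by
  -- a.e. every point is on the sphere
  have hae : ∀ᵐ x ∂σ, ‖x‖ = 1 := by
    rw [ae_iff]
    refine measure_mono_null (fun x hx => ?_) hσ
    simpa [mem_sphere_zero_iff_norm] using hx
  have hcont : Continuous fun x : EuclideanSpace ℝ (Fin p) => Real.exp ⟪ξ, x⟫ :=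
    Real.continuous_exp.comp (continuous_const.inner continuous_id)
  -- integrability of the vector integrand
  have hg : Integrable (fun x : EuclideanSpace ℝ (Fin p) => Real.exp ⟪ξ, x⟫ • x) σ := by
    refine Integrable.mono' (integrable_const (Real.exp ‖ξ‖)) ?_ ?_
    · exact (hcont.smul continuous_id).aestronglyMeasurable
    · filter_upwards [hae] with x hx
      have h1 : ⟪ξ, x⟫ ≤ ‖ξ‖ := by
        simpa [hx] using real_inner_le_norm ξ x
      calc ‖Real.exp ⟪ξ, x⟫ • x‖ = Real.exp ⟪ξ, x⟫ * ‖x‖ := by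
            rw [norm_smul, Real.norm_eq_abs, abs_of_pos (Real.exp_pos _)]
        _ ≤ Real.exp ‖ξ‖ := by rw [hx, mul_one]; exact Real.exp_le_exp.2 h1
  -- integrability of the scalar integrand, for any parameter ζ
  have key : ∀ ζ : EuclideanSpace ℝ (Fin p),
      Integrable (fun x => Real.exp ⟪ζ, x⟫ * ⟪ζ, x⟫) σ := by
    intro ζ
    have hcontζ : Continuous fun x : EuclideanSpace ℝ (Fin p) => Real.exp ⟪ζ, x⟫ :=
      Real.continuous_exp.comp (continuous_const.inner continuous_id)
    refine Integrable.mono' (integrable_const (Real.exp ‖ζ‖ * ‖ζ‖)) ?_ ?_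
    · exact (hcontζ.mul (continuous_const.inner continuous_id)).aestronglyMeasurable
    · filter_upwards [hae] with x hx
      have h1 : |⟪ζ, x⟫| ≤ ‖ζ‖ := by
        simpa [hx] using abs_real_inner_le_norm ζ x
      have h2 : ⟪ζ, x⟫ ≤ ‖ζ‖ := le_trans (le_abs_self _) h1
      rw [Real.norm_eq_abs, abs_mul, abs_of_pos (Real.exp_pos _)]
      exact mul_le_mul (Real.exp_le_exp.2 h2) h1 (abs_nonneg _) (le_of_lt (Real.exp_pos _))
  set I : EuclideanSpace ℝ (Fin p) := ∫ x, Real.exp ⟪ξ, x⟫ • x ∂σ with hI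
  -- I is fixed by every isometry fixing ξ
  have hfix : ∀ T : EuclideanSpace ℝ (Fin p) ≃ₗᵢ[ℝ] EuclideanSpace ℝ (Fin p),
      T ξ = ξ → T I = I := by
    intro T hT
    have hTcomp : ∀ x : EuclideanSpace ℝ (Fin p), ⟪ξ, T x⟫ = ⟪ξ, x⟫ := by
      intro x
      conv_lhs => rw [← hT]
      exact T.inner_map_map ξ x
    have hL := (T.toLinearIsometry.toContinuousLinearMap).integral_comp_comm hg
    have hTI : ∫ x, Real.exp ⟪ξ, x⟫ • T x ∂σ = T I := by simpa using hL
    rw [← hTI]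
    have hmap := hinv T
    have hasm : AEStronglyMeasurable
        (fun y : EuclideanSpace ℝ (Fin p) => Real.exp ⟪ξ, y⟫ • y) (Measure.map T σ) := by
      rw [hmap]; exact (hcont.smul continuous_id).aestronglyMeasurable
    calc ∫ x, Real.exp ⟪ξ, x⟫ • T x ∂σ
        = ∫ x, Real.exp ⟪ξ, T x⟫ • T x ∂σ := by simp_rw [hTcomp]
      _ = ∫ y, Real.exp ⟪ξ, y⟫ • y ∂(Measure.map T σ) :=
          (integral_map T.continuous.aemeasurable hasm).symm
      _ = I := by rw [hmap]
  by_cases hξ : ξ = 0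
  · -- degenerate case: I = 0
    have hneg := hfix (LinearIsometryEquiv.neg ℝ) (by simp [hξ])
    have h : -I = I := by simpa using hneg
    have h2 : (2:ℝ) • I = 0 := by
      rw [two_smul]
      nth_rewrite 1 [← h]
      simp
    have hI0 : I = 0 := by
      rcases smul_eq_zero.mp h2 with h' | h'
      · norm_num at h'
      · exact h'
    exact ⟨⟨0, le_refl 0, by simp [hI0]⟩, ⟨0, le_refl 0, by simp [hI0]⟩⟩
  · -- ξ ≠ 0
    have hnξ : (0:ℝ) < ‖ξ‖ := norm_pos_iff.mpr hξ
    set a : ℝ := ⟪ξ, I⟫ / ‖ξ‖^2 with ha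
    set w : EuclideanSpace ℝ (Fin p) := I - a • ξ with hwdef
    have hξξ : ⟪ξ, ξ⟫ = ‖ξ‖^2 := real_inner_self_eq_norm_sq ξ
    have hw : ⟪ξ, w⟫ = 0 := by
      rw [hwdef, inner_sub_right, real_inner_smul_right, hξξ, ha]
      field_simp
      ring
    -- reflection through the hyperplane orthogonal to w
    set K : Submodule ℝ (EuclideanSpace ℝ (Fin p)) := (Submodule.span ℝ {w})ᗮ with hK'
    have hξK : ξ ∈ K := Submodule.mem_orthogonal_singleton_iff_inner_left.2 hw
    have hwK : w ∈ Kᗮ :=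
      Submodule.le_orthogonal_orthogonal _ (Submodule.mem_span_singleton_self w)
    have hrefl := hfix (K.reflection) (Submodule.reflection_mem_subspace_eq_self hξK)
    have hIdecomp : I = a • ξ + w := by rw [hwdef]; abel
    have hw0 : w = 0 := by
      have hre : K.reflection I = a • ξ - w := by
        rw [hIdecomp, map_add, (K.reflection).map_smul,
          Submodule.reflection_mem_subspace_eq_self hξK,
          Submodule.reflection_mem_subspace_orthogonalComplement_eq_neg hwK]
        abel
      rw [hrefl, hIdecomp] at hre
      have h2 : (2:ℝ) • w = 0 := by
        rw [two_smul]
        linear_combination (norm := module) hre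
      rcases smul_eq_zero.mp h2 with h' | h'
      · norm_num at h'
      · exact h'
    have hIa : I = a • ξ := by rw [hIdecomp, hw0, add_zero]
    -- show ⟪ξ, I⟫ ≥ 0 using the symmetry x ↦ -x
    have hint := key ξ
    have hint2 : Integrable (fun x => Real.exp (-⟪ξ, x⟫) * (-⟪ξ, x⟫)) σ := by
      have := key (-ξ)
      simpa [inner_neg_left] using this
    have hinner : ⟪ξ, I⟫ = ∫ x, Real.exp ⟪ξ, x⟫ * ⟪ξ, x⟫ ∂σ := by
      rw [hI, ← integral_inner hg ξ]
      congr 1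
      ext x
      rw [real_inner_smul_right]
      try ring
    have hnegsym : ∫ x, Real.exp ⟪ξ, x⟫ * ⟪ξ, x⟫ ∂σ
        = ∫ x, Real.exp (-⟪ξ, x⟫) * (-⟪ξ, x⟫) ∂σ := by
      have hmap := hinv (LinearIsometryEquiv.neg ℝ)
      have hasm : AEStronglyMeasurable
          (fun y : EuclideanSpace ℝ (Fin p) => Real.exp ⟪ξ, y⟫ * ⟪ξ, y⟫)
          (Measure.map (LinearIsometryEquiv.neg ℝ) σ) := by
        rw [hmap]
        exact (hcont.mul (continuous_const.inner continuous_id)).aestronglyMeasurable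
      conv_lhs => rw [← hmap]
      rw [integral_map (LinearIsometryEquiv.neg ℝ).continuous.aemeasurable hasm]
      all_goals simp [inner_neg_right]
    have hnn : 0 ≤ ⟪ξ, I⟫ := by
      have h2 : 2 * ⟪ξ, I⟫ = ∫ x, (Real.exp ⟪ξ, x⟫ * ⟪ξ, x⟫
          + Real.exp (-⟪ξ, x⟫) * (-⟪ξ, x⟫)) ∂σ := by
        rw [integral_add hint hint2, ← hnegsym, ← hinner]; ring
      have h3 : 0 ≤ ∫ x, (Real.exp ⟪ξ, x⟫ * ⟪ξ, x⟫
          + Real.exp (-⟪ξ, x⟫) * (-⟪ξ, x⟫)) ∂σ := by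
        refine integral_nonneg fun x => ?_
        simp only [Pi.zero_apply]
        set t := ⟪ξ, x⟫
        rcases le_or_gt 0 t with ht | ht
        · have := Real.exp_le_exp.2 (show -t ≤ t by linarith)
          nlinarith
        · have := Real.exp_le_exp.2 (show t ≤ -t by linarith)
          nlinarith
      linarith
    have hanneg : 0 ≤ a := by
      rw [ha]
      exact div_nonneg hnn (sq_nonneg _)
    refine ⟨⟨a, hanneg, hIa⟩, ⟨(vmfK σ ξ)⁻¹ * a, ?_, ?_⟩⟩
    · exact mul_nonneg (inv_nonneg.2 (le_of_lt (hK ξ))) hanneg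
    · rw [hIa, smul_smul]
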